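/- Let V, P, Q ∈ S be distinct points such that the lines VP and VQ are both halving lines of S. Then there exists a point R ∈ S, distinct from V, P, Q, such that VR is a halving line of S and the three vectors P−V, Q−V, R−V do not all lie in a single closed half-plane: there is no nonzero vector u ∈ ℝ² with ⟨u, P−V⟩ ≥ 0, ⟨u, Q−V⟩ ≥ 0 and ⟨u, R−V⟩ ≥ 0. -/

import Mathlib

/-- Planar cross product (signed area determinant) of two vectors in `ℝ × ℝ`. -/
def det2 (u v : ℝ × ℝ) : ℝ := u.1 * v.2 - u.2 * v.1

/-- Dot product of two vectors in `ℝ × ℝ`. -/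
def dot2 (u v : ℝ × ℝ) : ℝ := u.1 * v.1 + u.2 * v.2

/-- A finite set of points of the plane is in general position if no three
distinct points of it are collinear. -/
def GenPos (S : Finset (ℝ × ℝ)) : Prop :=
  ∀ P ∈ S, ∀ Q ∈ S, ∀ R ∈ S, P ≠ Q → P ≠ R → Q ≠ R →
    ¬ Collinear ℝ ({P, Q, R} : Set (ℝ × ℝ))

/-- The line through the two distinct points `P, Q ∈ S` is a halving line of `S`:
each of the two open half-planes it determines contains exactly
`(S.card - 2) / 2` points of `S`. -/
def IsHalving (S : Finset (ℝ × ℝ)) (P Q : ℝ × ℝ) : Prop :=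
  P ∈ S ∧ Q ∈ S ∧ P ≠ Q ∧
  {X ∈ (S : Set (ℝ × ℝ)) | 0 < det2 (Q - P) (X - P)}.ncard = (S.card - 2) / 2 ∧
  {X ∈ (S : Set (ℝ × ℝ)) | det2 (Q - P) (X - P) < 0}.ncard = (S.card - 2) / 2

/-- Degree of a point in the underlying graph of `S`: the number of points `Q`
such that the line `PQ` is a halving line of `S`. -/
noncomputable def hdeg (S : Finset (ℝ × ℝ)) (P : ℝ × ℝ) : ℕ :=
  {Q : ℝ × ℝ | IsHalving S P Q}.ncard

/-- The number of halving lines of `S`, counted as unordered pairs of points. -/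
noncomputable def numHalvingLines (S : Finset (ℝ × ℝ)) : ℕ :=
  {e : Finset (ℝ × ℝ) | ∃ P Q : ℝ × ℝ, e = {P, Q} ∧ IsHalving S P Q}.ncard

/-- The underlying graph of `S`: vertices are the points of `S`, and two points
are adjacent exactly when the line through them is a halving line of `S`. -/
def underlyingGraph (S : Finset (ℝ × ℝ)) : SimpleGraph {x : ℝ × ℝ // x ∈ S} where
  Adj P Q := IsHalving S P.1 Q.1 ∧ IsHalving S Q.1 P.1
  symm := ⟨fun _ _ h => ⟨h.2, h.1⟩⟩
  loopless := ⟨fun _ h => h.1.2.2.1 rfl⟩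


section Stmt4Aux

set_option maxHeartbeats 1000000

lemma det2_self (u : ℝ × ℝ) : det2 u u = 0 := by simp [det2]; ring
lemma det2_anti (u v : ℝ × ℝ) : det2 u v = - det2 v u := by simp [det2]; ring
lemma det2_zero_right (u : ℝ × ℝ) : det2 u 0 = 0 := by simp [det2]
lemma det2_neg_left (u v : ℝ × ℝ) : det2 (-u) v = - det2 u v := by simp [det2]; ring
lemma det2_neg_right (u v : ℝ × ℝ) : det2 u (-v) = - det2 u v := by simp [det2]; ring
lemma det2_smul_right (t : ℝ) (u v : ℝ × ℝ) : det2 u (t • v) = t * det2 u v := by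
  simp [det2, Prod.smul_fst, Prod.smul_snd, smul_eq_mul]; ring
lemma dot2_smul_right (t : ℝ) (u v : ℝ × ℝ) : dot2 u (t • v) = t * dot2 u v := by
  simp [dot2, Prod.smul_fst, Prod.smul_snd, smul_eq_mul]; ring
lemma dot2_self_pos {u : ℝ × ℝ} (hu : u ≠ 0) : 0 < dot2 u u := by
  rcases eq_or_ne u.1 0 with h1 | h1
  · have h2 : u.2 ≠ 0 := fun h2 => hu (Prod.ext h1 h2)
    simp only [dot2]; nlinarith [mul_self_pos.mpr h2, mul_self_nonneg u.1]
  · simp only [dot2]; nlinarith [mul_self_pos.mpr h1, mul_self_nonneg u.2]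
lemma det2_ne_zero_left {u v : ℝ × ℝ} (h : det2 u v ≠ 0) : u ≠ 0 := by
  intro h0; apply h; simp [h0, det2]
lemma det2_ne_zero_right {u v : ℝ × ℝ} (h : det2 u v ≠ 0) : v ≠ 0 := by
  intro h0; apply h; simp [h0, det2]

lemma exists_smul_of_det2 {u v : ℝ × ℝ} (hu : u ≠ 0) (h : det2 u v = 0) :
    ∃ t : ℝ, v = t • u := by
  have hu2 : 0 < dot2 u u := dot2_self_pos hu
  refine ⟨dot2 u v / dot2 u u, ?_⟩
  have h' : u.1 * v.2 - u.2 * v.1 = 0 := h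
  have hne : dot2 u u ≠ 0 := ne_of_gt hu2
  apply Prod.ext
  · show v.1 = dot2 u v / dot2 u u * u.1
    field_simp
    simp only [dot2]
    linear_combination (-u.2) * h'
  · show v.2 = dot2 u v / dot2 u u * u.2
    field_simp
    simp only [dot2]
    linear_combination u.1 * h'

lemma collinear_of_det2 {P Q R : ℝ × ℝ} (h : det2 (Q - P) (R - P) = 0) :
    Collinear ℝ ({P, Q, R} : Set (ℝ × ℝ)) := by
  rcases eq_or_ne Q P with rfl | hQP
  · rw [Set.insert_idem]; exact collinear_pair ℝ Q R
  · obtain ⟨t, ht⟩ := exists_smul_of_det2 (sub_ne_zero.mpr hQP) h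
    apply (collinear_iff_of_mem (Set.mem_insert P {Q, R})).mpr
    refine ⟨Q - P, ?_⟩
    intro p hp
    rcases hp with rfl | rfl | rfl
    · exact ⟨0, by simp⟩
    · exact ⟨1, by simp⟩
    · exact ⟨t, by rw [← ht]; simp⟩

lemma dot2_neg_left (u v : ℝ × ℝ) : dot2 (-u) v = - dot2 u v := by
  simp [dot2]; ring

lemma plucker (c c' v a : ℝ × ℝ) :
    det2 c c' * det2 a v = det2 c v * det2 a c' + det2 v c' * det2 a c := by
  simp only [det2]; ring

lemma ks_generic {c c' y : ℝ × ℝ} (hD : 0 < det2 c c') (hy : y ≠ 0)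
    (h1 : ¬(0 < det2 c y ∧ 0 < det2 y c'))
    (h2 : ¬(0 < det2 c (-y) ∧ 0 < det2 (-y) c'))
    (hne : det2 c' y ≠ 0) :
    0 < det2 c' y ↔ (0 < det2 c y ∨ (det2 c y = 0 ∧ dot2 c y < 0)) := by
  have hc : c ≠ 0 := det2_ne_zero_left (ne_of_gt hD)
  rcases lt_trichotomy (det2 c y) 0 with hlt | heq | hgt
  · constructor
    · intro hpos
      exfalso; apply h2
      refine ⟨by rw [det2_neg_right]; linarith, ?_⟩
      rw [det2_neg_left, det2_anti y c', neg_neg]; exact hpos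
    · rintro (h | ⟨h, _⟩) <;> linarith
  · obtain ⟨t, rfl⟩ := exists_smul_of_det2 hc heq
    have ht : t ≠ 0 := by
      rintro rfl; exact hy (by simp)
    have hcc := dot2_self_pos hc
    have h5 : det2 c' c = -det2 c c' := by rw [det2_anti]
    rw [det2_smul_right, dot2_smul_right, det2_smul_right, h5]
    constructor
    · intro h6
      refine Or.inr ⟨by simp [det2_self], ?_⟩
      nlinarith
    · rintro (h6 | ⟨-, h6⟩)
      · simp only [det2_self, mul_zero] at h6; nlinarith
      · nlinarith
  · constructor
    · intro _; exact Or.inl hgt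
    · intro _
      rcases hne.lt_or_gt with hneg | hpos
      · exfalso
        exact h1 ⟨hgt, by rw [det2_anti y c']; linarith⟩
      · exact hpos

lemma ks_cross {c c' y : ℝ × ℝ} (hD : 0 < det2 c c') (hy : y ≠ 0)
    (hpar : det2 c' y = 0) :
    det2 c y ≠ 0 ∧ (dot2 c' y < 0 ↔ det2 c y < 0) := by
  have hc' : c' ≠ 0 := det2_ne_zero_left (by rw [det2_anti] at hD; intro h; rw [det2_anti c' c] at *; nlinarith)
  obtain ⟨t, rfl⟩ := exists_smul_of_det2 hc' hpar
  have ht : t ≠ 0 := by rintro rfl; exact hy (by simp)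
  have hcc := dot2_self_pos hc'
  rw [det2_smul_right, dot2_smul_right]
  constructor
  · intro h; rcases mul_eq_zero.mp h with h | h
    · exact ht h
    · linarith
  · constructor <;> intro <;> nlinarith

open Classical in
/-- The "left" halfplane point set for direction `c`, with points backward-parallel
to `c` included. -/
noncomputable def Lset (S : Finset (ℝ × ℝ)) (V c : ℝ × ℝ) : Finset (ℝ × ℝ) :=
  (S.erase V).filter
    (fun Y => 0 < det2 c (Y - V) ∨ (det2 c (Y - V) = 0 ∧ dot2 c (Y - V) < 0))

lemma mem_Lset {S : Finset (ℝ × ℝ)} {V c Y : ℝ × ℝ} :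
    Y ∈ Lset S V c ↔ Y ∈ S.erase V ∧
      (0 < det2 c (Y - V) ∨ (det2 c (Y - V) = 0 ∧ dot2 c (Y - V) < 0)) := by
  simp [Lset]

lemma step_point {S : Finset (ℝ × ℝ)} {V c Z : ℝ × ℝ}
    (hZ : Z ∈ S.erase V)
    (hD : 0 < det2 c (Z - V))
    (hpar : ∀ Y ∈ S.erase V, det2 (Z - V) (Y - V) = 0 → Y = Z)
    (hbet : ∀ Y ∈ S.erase V,
      ¬(0 < det2 c (Y - V) ∧ 0 < det2 (Y - V) (Z - V)) ∧
      ¬(0 < det2 c (V - Y) ∧ 0 < det2 (V - Y) (Z - V))) :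
    Lset S V (Z - V) = (Lset S V c).erase Z ∧ Z ∈ Lset S V c := by
  have hZV : Z - V ≠ 0 := by
    rw [sub_ne_zero]; exact (Finset.mem_erase.mp hZ).1
  constructor
  · ext Y
    rw [Finset.mem_erase, mem_Lset, mem_Lset]
    constructor
    · rintro ⟨hYT, hcond⟩
      rcases eq_or_ne Y Z with rfl | hYZ
      · exfalso
        rw [det2_self] at hcond
        rcases hcond with h | ⟨-, h⟩
        · exact lt_irrefl 0 h
        · exact absurd (dot2_self_pos hZV) (by linarith)
      · have hne : det2 (Z - V) (Y - V) ≠ 0 := fun h => hYZ (hpar Y hYT h)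
        have hYV : Y - V ≠ 0 := by
          rw [sub_ne_zero]; exact (Finset.mem_erase.mp hYT).1
        have hbetY := hbet Y hYT
        rw [show V - Y = -(Y - V) by ring] at hbetY
        have := (ks_generic hD hYV hbetY.1 hbetY.2 hne).mp
        refine ⟨hYZ, hYT, ?_⟩
        rcases hcond with h | ⟨h, -⟩
        · exact this h
        · exact absurd h hne
    · rintro ⟨hYZ, hYT, hcond⟩
      have hne : det2 (Z - V) (Y - V) ≠ 0 := fun h => hYZ (hpar Y hYT h)
      have hYV : Y - V ≠ 0 := by
        rw [sub_ne_zero]; exact (Finset.mem_erase.mp hYT).1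
      have hbetY := hbet Y hYT
      rw [show V - Y = -(Y - V) by ring] at hbetY
      exact ⟨hYT, Or.inl ((ks_generic hD hYV hbetY.1 hbetY.2 hne).mpr hcond)⟩
  · exact mem_Lset.mpr ⟨hZ, Or.inl hD⟩

lemma step_anti {S : Finset (ℝ × ℝ)} {V c Z : ℝ × ℝ}
    (hZ : Z ∈ S.erase V)
    (hD : 0 < det2 c (V - Z))
    (hpar : ∀ Y ∈ S.erase V, det2 (V - Z) (Y - V) = 0 → Y = Z)
    (hbet : ∀ Y ∈ S.erase V,
      ¬(0 < det2 c (Y - V) ∧ 0 < det2 (Y - V) (V - Z)) ∧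
      ¬(0 < det2 c (V - Y) ∧ 0 < det2 (V - Y) (V - Z))) :
    Lset S V (V - Z) = insert Z (Lset S V c) ∧ Z ∉ Lset S V c := by
  have hZV : Z - V ≠ 0 := by
    rw [sub_ne_zero]; exact (Finset.mem_erase.mp hZ).1
  have hVZ : (V - Z) = -(Z - V) := by ring
  have hZnot : Z ∉ Lset S V c := by
    rw [mem_Lset]
    rintro ⟨-, h | ⟨h, -⟩⟩
    · rw [hVZ, det2_neg_right] at hD; linarith
    · rw [hVZ, det2_neg_right] at hD; linarith
  refine ⟨?_, hZnot⟩
  ext Y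
  rw [Finset.mem_insert, mem_Lset, mem_Lset]
  constructor
  · rintro ⟨hYT, hcond⟩
    rcases eq_or_ne Y Z with rfl | hYZ
    · exact Or.inl rfl
    · have hne : det2 (V - Z) (Y - V) ≠ 0 := fun h => hYZ (hpar Y hYT h)
      have hYV : Y - V ≠ 0 := by
        rw [sub_ne_zero]; exact (Finset.mem_erase.mp hYT).1
      have hbetY := hbet Y hYT
      rw [show V - Y = -(Y - V) by ring] at hbetY
      have := (ks_generic hD hYV hbetY.1 hbetY.2 hne).mp
      rcases hcond with h | ⟨h, -⟩
      · exact Or.inr ⟨hYT, this h⟩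
      · exact absurd h hne
  · rintro (rfl | ⟨hYT, hcond⟩)
    · refine ⟨hZ, Or.inr ⟨?_, ?_⟩⟩
      · rw [hVZ, det2_neg_left, det2_self, neg_zero]
      · rw [hVZ, dot2_neg_left]
        have := dot2_self_pos hZV
        linarith
    · have hYZ : Y ≠ Z := fun h => hZnot (h ▸ mem_Lset.mpr ⟨hYT, hcond⟩)
      have hne : det2 (V - Z) (Y - V) ≠ 0 := fun h => hYZ (hpar Y hYT h)
      have hYV : Y - V ≠ 0 := by
        rw [sub_ne_zero]; exact (Finset.mem_erase.mp hYT).1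
      have hbetY := hbet Y hYT
      rw [show V - Y = -(Y - V) by ring] at hbetY
      exact ⟨hYT, Or.inl ((ks_generic hD hYV hbetY.1 hbetY.2 hne).mpr hcond)⟩

/-- Comparison of angular order (within the halfplane `det2 a · < 0`) via the
cotangent-like key `dot2 a x / det2 a x`. -/
lemma korder {a u w : ℝ × ℝ} (hu : det2 a u < 0) (hw : det2 a w < 0) :
    (0 < det2 u w ↔ dot2 a w / det2 a w < dot2 a u / det2 a u) := by
  have ha : a ≠ 0 := det2_ne_zero_left (ne_of_lt hu)
  have ha2 : 0 < dot2 a a := dot2_self_pos ha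
  have hid : dot2 a u * det2 a w - dot2 a w * det2 a u = dot2 a a * det2 u w := by
    simp only [det2, dot2]; ring
  rw [show dot2 a w / det2 a w = -dot2 a w / -det2 a w by rw [neg_div_neg_eq],
      show dot2 a u / det2 a u = -dot2 a u / -det2 a u by rw [neg_div_neg_eq],
      div_lt_div_iff₀ (by linarith) (by linarith)]
  constructor <;> intro h <;> nlinarith


noncomputable def edir (b V Z : ℝ × ℝ) : ℝ × ℝ :=
  if 0 < det2 b (Z - V) then Z - V else V - Z

lemma main_lemma (S : Finset (ℝ × ℝ)) (heven : Even S.card) (h4 : 4 ≤ S.card)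
    (hgp : GenPos S) (V P Q : ℝ × ℝ)
    (hVP : V ≠ P) (hVQ : V ≠ Q) (hPQ : P ≠ Q)
    (h1 : IsHalving S V P) (h2 : IsHalving S V Q)
    (hab : 0 < det2 (P - V) (Q - V)) :
    ∃ R ∈ S, R ≠ V ∧ R ≠ P ∧ R ≠ Q ∧ IsHalving S V R ∧
      ¬ ∃ u : ℝ × ℝ, u ≠ 0 ∧
        0 ≤ dot2 u (P - V) ∧ 0 ≤ dot2 u (Q - V) ∧ 0 ≤ dot2 u (R - V) := by
  classical
  obtain ⟨hVS, hPS, -, hPpos, hPneg⟩ := h1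
  obtain ⟨-, hQS, -, hQpos, hQneg⟩ := h2
  set a := P - V with ha_def
  set b := Q - V with hb_def
  set T := S.erase V with hT_def
  set k := (S.card - 2) / 2 with hk_def
  have hane : a ≠ 0 := sub_ne_zero.mpr (Ne.symm hVP)
  have hbne : b ≠ 0 := sub_ne_zero.mpr (Ne.symm hVQ)
  have hPT : P ∈ T := Finset.mem_erase.mpr ⟨Ne.symm hVP, hPS⟩
  have hQT : Q ∈ T := Finset.mem_erase.mpr ⟨Ne.symm hVQ, hQS⟩
  have hTsub : ∀ Y, Y ∈ T → Y ∈ S ∧ Y ≠ V := by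
    intro Y hY; exact ⟨(Finset.mem_erase.mp hY).2, (Finset.mem_erase.mp hY).1⟩
  -- cardinality arithmetic
  have hTcard : T.card = 2 * k + 1 := by
    have h5 : T.card = S.card - 1 := Finset.card_erase_of_mem hVS
    obtain ⟨m, hm⟩ := heven
    have h6 : S.card - 2 = 2 * (m - 1) := by omega
    have h7 : k = m - 1 := by
      rw [hk_def, h6, Nat.mul_div_cancel_left _ (by norm_num : 0 < 2)]
    omega
  -- general position, via determinants
  have hpar' : ∀ W, W ∈ S → W ≠ V → ∀ Y ∈ T, det2 (W - V) (Y - V) = 0 → Y = W := by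
    intro W hWS hWV Y hYT h
    by_contra hYW
    obtain ⟨hYS, hYV⟩ := hTsub Y hYT
    exact hgp V hVS W hWS Y hYS (Ne.symm hWV) (Ne.symm hYV) (fun h' => hYW h'.symm)
      (collinear_of_det2 h)
  -- counting conversion from ncard over S to filtered card over T
  have hconv : ∀ p : ℝ × ℝ → Prop, ¬ p V →
      {X ∈ (S : Set (ℝ × ℝ)) | p X}.ncard = (T.filter p).card := by
    intro p hpV
    have hs : {X ∈ (S : Set (ℝ × ℝ)) | p X} = ↑(T.filter p) := by
      ext X
      simp only [Finset.coe_filter, Set.mem_setOf_eq, hT_def, Finset.mem_erase,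
        Finset.mem_coe]
      constructor
      · rintro ⟨hX, hp⟩
        exact ⟨⟨fun h => hpV (h ▸ hp), hX⟩, hp⟩
      · rintro ⟨⟨-, hX⟩, hp⟩
        exact ⟨hX, hp⟩
    rw [hs, Set.ncard_coe_finset]
  -- the two boundary counts
  have hbdry : ∀ W : ℝ × ℝ, W ∈ S → V ≠ W →
      {X ∈ (S : Set (ℝ × ℝ)) | det2 (W - V) (X - V) < 0}.ncard = k →
      (Lset S V (-(W - V))).card = k + 1 := by
    intro W hWS hVW hcnt
    have hWV : W - V ≠ 0 := sub_ne_zero.mpr (Ne.symm hVW)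
    have hc : (T.filter (fun X => det2 (W - V) (X - V) < 0)).card = k := by
      rw [← hconv _ (by rw [sub_self, det2_zero_right]; exact lt_irrefl 0)]
      exact hcnt
    have hset : Lset S V (-(W - V)) =
        insert W (T.filter (fun X => det2 (W - V) (X - V) < 0)) := by
      ext Y
      rw [mem_Lset, Finset.mem_insert, Finset.mem_filter]
      constructor
      · rintro ⟨hYT, hcond⟩
        rw [det2_neg_left, dot2_neg_left] at hcond
        rcases hcond with h | ⟨h, hd⟩
        · exact Or.inr ⟨hYT, by linarith⟩
        · exact Or.inl (hpar' W hWS (Ne.symm hVW) Y hYT (by linarith))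
      · rintro (rfl | ⟨hYT, h⟩)
        · refine ⟨Finset.mem_erase.mpr ⟨Ne.symm hVW, hWS⟩, Or.inr ⟨?_, ?_⟩⟩
          · rw [det2_neg_left, det2_self, neg_zero]
          · rw [dot2_neg_left]
            have := dot2_self_pos hWV
            linarith
        · exact ⟨hYT, Or.inl (by rw [det2_neg_left]; linarith)⟩
    rw [hset, Finset.card_insert_of_notMem, hc]
    rw [Finset.mem_filter]
    rintro ⟨-, h⟩
    rw [det2_self] at h
    exact lt_irrefl 0 h
  have hLa : (Lset S V (-a)).card = k + 1 := hbdry P hPS hVP hPneg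
  have hLb : (Lset S V (-b)).card = k + 1 := hbdry Q hQS hVQ hQneg
  -- the events
  set E := T.filter (fun Z => (det2 a (Z - V) < 0 ∧ 0 < det2 b (Z - V)) ∨
      (det2 a (V - Z) < 0 ∧ 0 < det2 b (V - Z))) with hE_def
  have hdirE : ∀ Z ∈ E, (det2 a (edir b V Z) < 0 ∧ 0 < det2 b (edir b V Z)) ∧
      (edir b V Z = Z - V ∨ edir b V Z = V - Z) := by
    intro Z hZ
    rw [hE_def, Finset.mem_filter] at hZ
    rcases hZ.2 with ⟨h5, h6⟩ | ⟨h5, h6⟩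
    · rw [edir, if_pos h6]; exact ⟨⟨h5, h6⟩, Or.inl rfl⟩
    · have hneg : ¬ (0 < det2 b (Z - V)) := by
        rw [show Z - V = -(V - Z) by ring, det2_neg_right]; linarith
      rw [edir, if_neg hneg]; exact ⟨⟨h5, h6⟩, Or.inr rfl⟩
  have hdir_eq : ∀ Y ∈ T, ∀ v : ℝ × ℝ, (v = Y - V ∨ v = V - Y) →
      det2 a v < 0 → 0 < det2 b v → Y ∈ E ∧ edir b V Y = v := by
    intro Y hYT v hv hva hvb
    rcases hv with rfl | rfl
    · exact ⟨Finset.mem_filter.mpr ⟨hYT, Or.inl ⟨hva, hvb⟩⟩, by rw [edir, if_pos hvb]⟩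
    · have hneg : ¬ (0 < det2 b (Y - V)) := by
        rw [show Y - V = -(V - Y) by ring, det2_neg_right]; linarith
      exact ⟨Finset.mem_filter.mpr ⟨hYT, Or.inr ⟨hva, hvb⟩⟩, by rw [edir, if_neg hneg]⟩
  -- cone lemma: a direction strictly between two directions of the closed cone
  -- is in the open cone
  have hcone : ∀ c c' v : ℝ × ℝ, 0 < det2 c c' →
      det2 a c ≤ 0 → det2 a c' ≤ 0 → (det2 a c < 0 ∨ det2 a c' < 0) →
      0 ≤ det2 b c → 0 ≤ det2 b c' → (0 < det2 b c ∨ 0 < det2 b c') →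
      0 < det2 c v → 0 < det2 v c' → det2 a v < 0 ∧ 0 < det2 b v := by
    intro c c' v hD hac hac' hacne hbc hbc' hbcne hv1 hv2
    have hpa := plucker c c' v a
    have hpb := plucker c c' v b
    constructor
    · by_contra h0
      push_neg at h0
      rcases hacne with h | h
      · nlinarith [mul_nonneg hD.le h0, mul_nonneg hv1.le (neg_nonneg.mpr hac'),
          mul_pos hv2 (neg_pos.mpr h)]
      · nlinarith [mul_nonneg hD.le h0, mul_pos hv1 (neg_pos.mpr h),
          mul_nonneg hv2.le (neg_nonneg.mpr hac)]
    · by_contra h0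
      push_neg at h0
      rcases hbcne with h | h
      · nlinarith [mul_nonneg hD.le (neg_nonneg.mpr h0), mul_pos hv2 h,
          mul_nonneg hv1.le hbc']
      · nlinarith [mul_nonneg hD.le (neg_nonneg.mpr h0), mul_pos hv1 h,
          mul_nonneg hv2.le hbc]
  -- the event builder
  have hev : ∀ c c' : ℝ × ℝ, 0 < det2 c c' →
      det2 a c ≤ 0 → det2 a c' ≤ 0 → (det2 a c < 0 ∨ det2 a c' < 0) →
      0 ≤ det2 b c → 0 ≤ det2 b c' → (0 < det2 b c ∨ 0 < det2 b c') →
      ∀ Y ∈ T, ∀ v : ℝ × ℝ, (v = Y - V ∨ v = V - Y) →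
      0 < det2 c v → 0 < det2 v c' →
      Y ∈ E ∧ edir b V Y = v ∧ 0 < det2 c v ∧ 0 < det2 v c' := by
    intro c c' hD hac hac' hacne hbc hbc' hbcne Y hYT v hv hv1 hv2
    obtain ⟨hva, hvb⟩ := hcone c c' v hD hac hac' hacne hbc hbc' hbcne hv1 hv2
    obtain ⟨hYE, hYdir⟩ := hdir_eq Y hYT v hv hva hvb
    exact ⟨hYE, hYdir, hv1, hv2⟩
  -- scalar facts about the boundary directions
  have e1 : det2 a (-a) = 0 := by rw [det2_neg_right, det2_self, neg_zero]
  have e2 : det2 a (-b) = -det2 a b := det2_neg_right a b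
  have e3 : det2 b (-a) = det2 a b := by rw [det2_neg_right, det2_anti b a, neg_neg]
  have e4 : det2 b (-b) = 0 := by rw [det2_neg_right, det2_self, neg_zero]
  have e5 : det2 (-a) (-b) = det2 a b := by rw [det2_neg_left, det2_neg_right, neg_neg]
  have hVQb : V - Q = -b := by rw [hb_def]; ring
  have hparQ : ∀ Y ∈ T, det2 (V - Q) (Y - V) = 0 → Y = Q := by
    intro Y hYT h
    apply hpar' Q hQS (Ne.symm hVQ) Y hYT
    rw [show V - Q = -(Q - V) by ring, det2_neg_left] at h
    linarith
  -- E is nonempty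
  have hEne : E.Nonempty := by
    rw [Finset.nonempty_iff_ne_empty]
    intro hE0
    have hD : 0 < det2 (-a) (V - Q) := by rw [hVQb, e5]; exact hab
    have hbet : ∀ Y ∈ T,
        ¬(0 < det2 (-a) (Y - V) ∧ 0 < det2 (Y - V) (V - Q)) ∧
        ¬(0 < det2 (-a) (V - Y) ∧ 0 < det2 (V - Y) (V - Q)) := by
      intro Y hYT
      constructor
      · rintro ⟨h5, h6⟩
        obtain ⟨hYE, -⟩ := hev (-a) (V - Q) hD (le_of_eq e1)
          (by rw [hVQb, e2]; linarith) (by rw [hVQb, e2]; right; linarith)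
          (by rw [e3]; linarith) (by rw [hVQb, e4]) (by rw [e3]; left; exact hab)
          Y hYT (Y - V) (Or.inl rfl) h5 h6
        rw [hE0] at hYE
        exact absurd hYE (Finset.notMem_empty Y)
      · rintro ⟨h5, h6⟩
        obtain ⟨hYE, -⟩ := hev (-a) (V - Q) hD (le_of_eq e1)
          (by rw [hVQb, e2]; linarith) (by rw [hVQb, e2]; right; linarith)
          (by rw [e3]; linarith) (by rw [hVQb, e4]) (by rw [e3]; left; exact hab)
          Y hYT (V - Y) (Or.inr rfl) h5 h6
        rw [hE0] at hYE
        exact absurd hYE (Finset.notMem_empty Y)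
    obtain ⟨hLeq, hQnot⟩ := step_anti hQT hD hparQ hbet
    have h7 : (Lset S V (V - Q)).card = (Lset S V (-a)).card + 1 := by
      rw [hLeq, Finset.card_insert_of_notMem hQnot]
    rw [hVQb, hLb, hLa] at h7
    omega
  -- the minimal event gives a "bad" event (left count ≤ k)
  obtain ⟨ZN, hZNE, hZNmin⟩ :=
    Finset.exists_min_image E (fun Z => dot2 a (edir b V Z) / det2 a (edir b V Z)) hEne
  have hZNcard : (Lset S V (edir b V ZN)).card = k := by
    obtain ⟨⟨hZNa, hZNb⟩, -⟩ := hdirE ZN hZNE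
    have hD : 0 < det2 (edir b V ZN) (V - Q) := by
      rw [hVQb, det2_neg_right, det2_anti]
      simpa using hZNb
    have hbet : ∀ Y ∈ T,
        ¬(0 < det2 (edir b V ZN) (Y - V) ∧ 0 < det2 (Y - V) (V - Q)) ∧
        ¬(0 < det2 (edir b V ZN) (V - Y) ∧ 0 < det2 (V - Y) (V - Q)) := by
      have hcnd1 := hZNa.le
      have hcnd2 : det2 a (V - Q) ≤ 0 := by rw [hVQb, e2]; linarith
      have hcnd3 : det2 a (edir b V ZN) < 0 ∨ det2 a (V - Q) < 0 := Or.inl hZNa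
      have hcnd4 := hZNb.le
      have hcnd5 : (0:ℝ) ≤ det2 b (V - Q) := by rw [hVQb, e4]
      have hcnd6 : 0 < det2 b (edir b V ZN) ∨ 0 < det2 b (V - Q) := Or.inl hZNb
      intro Y hYT
      constructor
      · rintro ⟨h5, h6⟩
        obtain ⟨hYE, hYdir, h5', -⟩ := hev _ _ hD hcnd1 hcnd2 hcnd3 hcnd4 hcnd5 hcnd6
          Y hYT (Y - V) (Or.inl rfl) h5 h6
        obtain ⟨⟨hYa, -⟩, -⟩ := hdirE Y hYE
        rw [← hYdir] at h5'
        have := (korder hZNa hYa).mp h5'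
        have := hZNmin Y hYE
        linarith
      · rintro ⟨h5, h6⟩
        obtain ⟨hYE, hYdir, h5', -⟩ := hev _ _ hD hcnd1 hcnd2 hcnd3 hcnd4 hcnd5 hcnd6
          Y hYT (V - Y) (Or.inr rfl) h5 h6
        obtain ⟨⟨hYa, -⟩, -⟩ := hdirE Y hYE
        rw [← hYdir] at h5'
        have := (korder hZNa hYa).mp h5'
        have := hZNmin Y hYE
        linarith
    obtain ⟨hLeq, hQnot⟩ := step_anti hQT hD hparQ hbet
    have h7 : (Lset S V (V - Q)).card = (Lset S V (edir b V ZN)).card + 1 := by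
      rw [hLeq, Finset.card_insert_of_notMem hQnot]
    rw [hVQb, hLb] at h7
    omega
  -- the maximal bad event
  set bad := E.filter (fun Z => (Lset S V (edir b V Z)).card ≤ k) with hbad_def
  have hbadne : bad.Nonempty :=
    ⟨ZN, Finset.mem_filter.mpr ⟨hZNE, le_of_eq hZNcard⟩⟩
  obtain ⟨Z0, hZ0bad, hZ0max⟩ :=
    Finset.exists_max_image bad (fun Z => dot2 a (edir b V Z) / det2 a (edir b V Z)) hbadne
  have hZ0E : Z0 ∈ E := (Finset.mem_filter.mp hZ0bad).1
  have hZ0card : (Lset S V (edir b V Z0)).card ≤ k := (Finset.mem_filter.mp hZ0bad).2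
  obtain ⟨⟨hZ0a, hZ0b⟩, hZ0dir⟩ := hdirE Z0 hZ0E
  have hZ0T : Z0 ∈ T := (Finset.mem_filter.mp hZ0E).1
  obtain ⟨hZ0S, hZ0V⟩ := hTsub Z0 hZ0T
  -- find the predecessor direction
  obtain ⟨c₀, hc₀card, hc₀D, hc₀bet⟩ : ∃ c₀ : ℝ × ℝ,
      k + 1 ≤ (Lset S V c₀).card ∧ 0 < det2 c₀ (edir b V Z0) ∧
      ∀ Y ∈ T, ¬(0 < det2 c₀ (Y - V) ∧ 0 < det2 (Y - V) (edir b V Z0)) ∧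
        ¬(0 < det2 c₀ (V - Y) ∧ 0 < det2 (V - Y) (edir b V Z0)) := by
    rcases Finset.eq_empty_or_nonempty
        (E.filter (fun W => dot2 a (edir b V Z0) / det2 a (edir b V Z0) <
          dot2 a (edir b V W) / det2 a (edir b V W))) with hF | hFne
    · -- Z0 is the global maximum; predecessor direction is -a
      refine ⟨-a, le_of_eq hLa.symm, by rw [det2_neg_left]; linarith, ?_⟩
      have hcnd1 := le_of_eq e1
      have hcnd2 := hZ0a.le
      have hcnd3 : det2 a (-a) < 0 ∨ det2 a (edir b V Z0) < 0 := Or.inr hZ0a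
      have hcnd4 : (0:ℝ) ≤ det2 b (-a) := by rw [e3]; linarith
      have hcnd5 := hZ0b.le
      have hcnd6 : 0 < det2 b (-a) ∨ 0 < det2 b (edir b V Z0) := Or.inr hZ0b
      have hD : 0 < det2 (-a) (edir b V Z0) := by rw [det2_neg_left]; linarith
      intro Y hYT
      constructor
      · rintro ⟨h5, h6⟩
        obtain ⟨hYE, hYdir, -, h6'⟩ := hev _ _ hD hcnd1 hcnd2 hcnd3 hcnd4 hcnd5 hcnd6
          Y hYT (Y - V) (Or.inl rfl) h5 h6
        obtain ⟨⟨hYa, -⟩, -⟩ := hdirE Y hYE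
        rw [← hYdir] at h6'
        have h8 := (korder hYa hZ0a).mp h6'
        have h9 : Y ∈ E.filter (fun W => dot2 a (edir b V Z0) / det2 a (edir b V Z0) <
            dot2 a (edir b V W) / det2 a (edir b V W)) :=
          Finset.mem_filter.mpr ⟨hYE, h8⟩
        rw [hF] at h9
        exact absurd h9 (Finset.notMem_empty Y)
      · rintro ⟨h5, h6⟩
        obtain ⟨hYE, hYdir, -, h6'⟩ := hev _ _ hD hcnd1 hcnd2 hcnd3 hcnd4 hcnd5 hcnd6
          Y hYT (V - Y) (Or.inr rfl) h5 h6
        obtain ⟨⟨hYa, -⟩, -⟩ := hdirE Y hYE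
        rw [← hYdir] at h6'
        have h8 := (korder hYa hZ0a).mp h6'
        have h9 : Y ∈ E.filter (fun W => dot2 a (edir b V Z0) / det2 a (edir b V Z0) <
            dot2 a (edir b V W) / det2 a (edir b V W)) :=
          Finset.mem_filter.mpr ⟨hYE, h8⟩
        rw [hF] at h9
        exact absurd h9 (Finset.notMem_empty Y)
    · -- there is a predecessor event W0
      obtain ⟨W0, hW0F, hW0min⟩ :=
        Finset.exists_min_image _ (fun Z => dot2 a (edir b V Z) / det2 a (edir b V Z)) hFne
      have hW0E : W0 ∈ E := (Finset.mem_filter.mp hW0F).1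
      have hW0gt : dot2 a (edir b V Z0) / det2 a (edir b V Z0) <
          dot2 a (edir b V W0) / det2 a (edir b V W0) := (Finset.mem_filter.mp hW0F).2
      obtain ⟨⟨hW0a, hW0b⟩, -⟩ := hdirE W0 hW0E
      have hW0bad : ¬ (Lset S V (edir b V W0)).card ≤ k := by
        intro h
        have h8 := hZ0max W0 (Finset.mem_filter.mpr ⟨hW0E, h⟩)
        linarith
      have hD : 0 < det2 (edir b V W0) (edir b V Z0) := (korder hW0a hZ0a).mpr hW0gt
      refine ⟨edir b V W0, by omega, hD, ?_⟩
      have hcnd3 : det2 a (edir b V W0) < 0 ∨ det2 a (edir b V Z0) < 0 := Or.inl hW0a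
      have hcnd6 : 0 < det2 b (edir b V W0) ∨ 0 < det2 b (edir b V Z0) := Or.inl hW0b
      intro Y hYT
      constructor
      · rintro ⟨h5, h6⟩
        obtain ⟨hYE, hYdir, h5', h6'⟩ := hev _ _ hD hW0a.le hZ0a.le hcnd3 hW0b.le hZ0b.le hcnd6
          Y hYT (Y - V) (Or.inl rfl) h5 h6
        obtain ⟨⟨hYa, -⟩, -⟩ := hdirE Y hYE
        rw [← hYdir] at h5' h6'
        have h8 := (korder hYa hZ0a).mp h6'
        have h9 := (korder hW0a hYa).mp h5'
        have h10 := hW0min Y (Finset.mem_filter.mpr ⟨hYE, h8⟩)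
        linarith
      · rintro ⟨h5, h6⟩
        obtain ⟨hYE, hYdir, h5', h6'⟩ := hev _ _ hD hW0a.le hZ0a.le hcnd3 hW0b.le hZ0b.le hcnd6
          Y hYT (V - Y) (Or.inr rfl) h5 h6
        obtain ⟨⟨hYa, -⟩, -⟩ := hdirE Y hYE
        rw [← hYdir] at h5' h6'
        have h8 := (korder hYa hZ0a).mp h6'
        have h9 := (korder hW0a hYa).mp h5'
        have h10 := hW0min Y (Finset.mem_filter.mpr ⟨hYE, h8⟩)
        linarith
  -- Z0 must be a "point" event, and its left count is exactly k
  have hparZ0 : ∀ Y ∈ T, det2 (Z0 - V) (Y - V) = 0 → Y = Z0 :=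
    hpar' Z0 hZ0S hZ0V
  rcases hZ0dir with hdp | hda
  swap
  · -- antipodal event: contradiction
    exfalso
    rw [hda] at hc₀D hc₀bet hZ0card
    have hparZ0' : ∀ Y ∈ T, det2 (V - Z0) (Y - V) = 0 → Y = Z0 := by
      intro Y hYT h
      apply hparZ0 Y hYT
      rw [show V - Z0 = -(Z0 - V) by ring, det2_neg_left] at h
      linarith
    obtain ⟨hLeq, hZnot⟩ := step_anti hZ0T hc₀D hparZ0' hc₀bet
    have h7 : (Lset S V (V - Z0)).card = (Lset S V c₀).card + 1 := by
      rw [hLeq, Finset.card_insert_of_notMem hZnot]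
    omega
  · -- point event: this is the halving line we want
    rw [hdp] at hc₀D hc₀bet hZ0card hZ0a hZ0b
    obtain ⟨hLeq, hZmem⟩ := step_point hZ0T hc₀D hparZ0 hc₀bet
    have h7 : (Lset S V (Z0 - V)).card + 1 = (Lset S V c₀).card := by
      rw [hLeq, Finset.card_erase_of_mem hZmem]
      have : 0 < (Lset S V c₀).card := by omega
      omega
    have hfinal : (Lset S V (Z0 - V)).card = k := by omega
    -- assemble the result
    have hRP : Z0 ≠ P := by
      rintro rfl
      rw [show Z0 - V = a from rfl, det2_self] at hZ0a
      exact lt_irrefl 0 hZ0a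
    have hRQ : Z0 ≠ Q := by
      rintro rfl
      rw [show Z0 - V = b from rfl, det2_self] at hZ0b
      exact lt_irrefl 0 hZ0b
    -- counting for IsHalving
    have hposfilter : T.filter (fun X => 0 < det2 (Z0 - V) (X - V)) = Lset S V (Z0 - V) := by
      ext Y
      rw [Finset.mem_filter, mem_Lset]
      constructor
      · rintro ⟨hYT, h⟩; exact ⟨hYT, Or.inl h⟩
      · rintro ⟨hYT, h | ⟨h, hd⟩⟩
        · exact ⟨hYT, h⟩
        · exfalso
          have := hparZ0 Y hYT h
          subst this
          exact absurd (dot2_self_pos (sub_ne_zero.mpr hZ0V)) (by linarith)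
    have hcntpos : {X ∈ (S : Set (ℝ × ℝ)) | 0 < det2 (Z0 - V) (X - V)}.ncard = k := by
      rw [hconv (fun X => 0 < det2 (Z0 - V) (X - V))
        (by intro h; rw [sub_self, det2_zero_right] at h; exact lt_irrefl 0 h)]
      rw [hposfilter]
      exact hfinal
    have hcntneg : {X ∈ (S : Set (ℝ × ℝ)) | det2 (Z0 - V) (X - V) < 0}.ncard = k := by
      rw [hconv (fun X => det2 (Z0 - V) (X - V) < 0)
        (by intro h; rw [sub_self, det2_zero_right] at h; exact lt_irrefl 0 h)]
      have hsplit : T.filter (fun Y => ¬ 0 < det2 (Z0 - V) (Y - V)) =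
          insert Z0 (T.filter (fun Y => det2 (Z0 - V) (Y - V) < 0)) := by
        ext Y
        rw [Finset.mem_filter, Finset.mem_insert, Finset.mem_filter]
        constructor
        · rintro ⟨hYT, h⟩
          rcases lt_trichotomy (det2 (Z0 - V) (Y - V)) 0 with h5 | h5 | h5
          · exact Or.inr ⟨hYT, h5⟩
          · exact Or.inl (hparZ0 Y hYT h5)
          · exact absurd h5 h
        · rintro (rfl | ⟨hYT, h⟩)
          · exact ⟨hZ0T, by rw [det2_self]; exact lt_irrefl 0⟩
          · exact ⟨hYT, by linarith⟩
      have hsum := Finset.card_filter_add_card_filter_not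
        (s := T) (p := fun Y => 0 < det2 (Z0 - V) (Y - V))
      have hZnotneg : Z0 ∉ T.filter (fun Y => det2 (Z0 - V) (Y - V) < 0) := by
        rw [Finset.mem_filter, det2_self]
        rintro ⟨-, h⟩
        exact lt_irrefl 0 h
      rw [hsplit, Finset.card_insert_of_notMem hZnotneg, hposfilter, hfinal, hTcard] at hsum
      omega
    refine ⟨Z0, hZ0S, hZ0V, hRP, hRQ, ⟨hVS, hZ0S, Ne.symm hZ0V, hcntpos, hcntneg⟩, ?_⟩
    rintro ⟨u, hu, hua, hub, huc⟩
    have hid1 : dot2 u (Z0 - V) * det2 a b =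
        det2 a (Z0 - V) * dot2 u b + det2 (Z0 - V) b * dot2 u a := by
      simp only [det2, dot2]; ring
    have ht1 : det2 (Z0 - V) b < 0 := by
      rw [det2_anti]; linarith
    have h7 : dot2 u a = 0 := by
      by_contra h0
      have h0' : 0 < dot2 u a := lt_of_le_of_ne hua (Ne.symm h0)
      nlinarith [mul_nonneg huc hab.le, mul_nonneg hub (neg_nonneg.mpr hZ0a.le),
        mul_pos (neg_pos.mpr ht1) h0']
    have h8 : dot2 u b = 0 := by
      by_contra h0
      have h0' : 0 < dot2 u b := lt_of_le_of_ne hub (Ne.symm h0)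
      nlinarith [mul_nonneg huc hab.le, mul_pos (neg_pos.mpr hZ0a) h0',
        mul_nonneg hua (neg_nonneg.mpr ht1.le)]
    have hu1 : u.1 * det2 a b = dot2 u a * b.2 - dot2 u b * a.2 := by
      simp only [det2, dot2]; ring
    have hu2 : u.2 * det2 a b = dot2 u b * a.1 - dot2 u a * b.1 := by
      simp only [det2, dot2]; ring
    rw [h7, h8] at hu1 hu2
    simp only [zero_mul, sub_zero, zero_sub, neg_zero, sub_self] at hu1 hu2
    apply hu
    have hab' : det2 a b ≠ 0 := ne_of_gt hab
    have hu1' : u.1 = 0 := by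
      rcases mul_eq_zero.mp hu1 with h | h
      · exact h
      · exact absurd h hab'
    have hu2' : u.2 = 0 := by
      rcases mul_eq_zero.mp hu2 with h | h
      · exact h
      · exact absurd h hab'
    exact Prod.ext hu1' hu2'

end Stmt4Aux

/-- given two halving lines `VP` and `VQ` through a common point `V`,
there is a third halving line `VR` such that the vectors `P - V`, `Q - V`, `R - V`
do not all lie in a single closed half-plane. -/
theorem stmt_4 (S : Finset (ℝ × ℝ)) (heven : Even S.card) (h4 : 4 ≤ S.card)
    (hgp : GenPos S) (V P Q : ℝ × ℝ)
    (hVP : V ≠ P) (hVQ : V ≠ Q) (hPQ : P ≠ Q)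
    (h1 : IsHalving S V P) (h2 : IsHalving S V Q) :
    ∃ R ∈ S, R ≠ V ∧ R ≠ P ∧ R ≠ Q ∧ IsHalving S V R ∧
      ¬ ∃ u : ℝ × ℝ, u ≠ 0 ∧
        0 ≤ dot2 u (P - V) ∧ 0 ≤ dot2 u (Q - V) ∧ 0 ≤ dot2 u (R - V) := by
  have hd : det2 (P - V) (Q - V) ≠ 0 := by
    intro h
    exact hgp V h1.1 P h1.2.1 Q h2.2.1 hVP hVQ hPQ (collinear_of_det2 h)
  rcases hd.lt_or_gt with hlt | hgt
  · obtain ⟨R, hRS, hRV, hRQ, hRP, hhalf, hnop⟩ :=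
      main_lemma S heven h4 hgp V Q P hVQ hVP (Ne.symm hPQ) h2 h1
        (by rw [det2_anti]; linarith)
    exact ⟨R, hRS, hRV, hRP, hRQ, hhalf,
      fun ⟨u, hu, ha', hb', hc'⟩ => hnop ⟨u, hu, hb', ha', hc'⟩⟩
  · exact main_lemma S heven h4 hgp V P Q hVP hVQ hPQ h1 h2 hgt
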